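/- Assume every complex eigenvalue of the symmetric matrix VᵀWWᵀV is rational. If τ > 1 is an integer with U^τ = I and U^s ≠ I for all integers s with 1 ≤ s < τ, then τ ∈ {2, 3, 4, 6, 12}. -/

import Mathlib

open Matrix Polynomial


lemma auxN (τ : ℕ) (hτ : 0 < τ) (l : ℂ) (hl : l ^ τ = 1) (q : ℚ)
    (hq : l + l⁻¹ = (q : ℂ)) : l ^ 12 = 1 := by
  have hl0 : l ≠ 0 := by
    intro h; rw [h] at hl; simp [zero_pow hτ.ne'] at hl
  have hinv : l⁻¹ = l ^ (τ - 1) := by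
    symm
    apply eq_inv_of_mul_eq_one_left
    rw [← pow_succ, Nat.sub_add_cancel hτ]
    exact hl
  -- l is integral over ℤ
  have hintl : IsIntegral ℤ l := by
    refine ⟨X ^ τ - 1, ?_, ?_⟩
    · have := monic_X_pow_sub_C (R := ℤ) (1 : ℤ) hτ.ne'
      simpa using this
    · simp [hl]
  have hintc : IsIntegral ℤ (l + l⁻¹) := by
    rw [hinv]
    exact hintl.add (hintl.pow _)
  -- q is an integer
  have hintq : IsIntegral ℤ (q : ℚ) := by
    rw [hq] at hintc
    have : (q : ℂ) = algebraMap ℚ ℂ q := rfl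
    rw [this] at hintc
    exact (isIntegral_algebraMap_iff (algebraMap ℚ ℂ).injective).mp hintc
  obtain ⟨m, hm⟩ := IsIntegrallyClosed.isIntegral_iff.mp hintq
  -- |l| = 1
  have habs : ‖l‖ = 1 := by
    have h1 : ‖l‖ ^ τ = 1 := by
      rw [← norm_pow, hl, norm_one]
    rcases lt_trichotomy ‖l‖ 1 with h | h | h
    · exfalso
      have := pow_lt_one₀ (norm_nonneg l) h hτ.ne'
      rw [h1] at this; exact lt_irrefl _ this
    · exact h
    · exfalso
      have := one_lt_pow₀ h hτ.ne'
      rw [h1] at this; exact lt_irrefl _ this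
  have hqm : l + l⁻¹ = (m : ℂ) := by
    rw [hq, ← hm]; simp [eq_intCast]
  have hbound : |(m : ℝ)| ≤ 2 := by
    have h1 : ‖l + l⁻¹‖ ≤ ‖l‖ + ‖l⁻¹‖ :=
      norm_add_le _ _
    rw [hqm, norm_inv, habs] at h1
    simp only [Complex.norm_intCast] at h1
    norm_num at h1
    exact h1
  have hb1 : (-2 : ℤ) ≤ m := by exact_mod_cast (abs_le.mp hbound).1
  have hb2 : m ≤ 2 := by exact_mod_cast (abs_le.mp hbound).2
  have h2 : l ^ 2 + 1 = (m : ℂ) * l := by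
    have := congrArg (fun z => z * l) hqm
    field_simp at this
    linear_combination this
  interval_cases m
  · -- m = -2
    have h3 : (l + 1) ^ 2 = 0 := by
      push_cast at h2
      linear_combination h2
    have hl1 : l = -1 := by
      have h4 := pow_eq_zero_iff (n := 2) (by norm_num) |>.mp h3
      linear_combination h4
    rw [hl1]; norm_num
  · -- m = -1
    have h3 : l ^ 3 = 1 := by
      push_cast at h2
      linear_combination (l - 1) * h2
    calc l ^ 12 = (l ^ 3) ^ 4 := by ring
    _ = 1 := by rw [h3]; norm_num
  · -- m = 0
    push_cast at h2
    linear_combination (l ^ 10 - l ^ 8 + l ^ 6 - l ^ 4 + l ^ 2 - 1) * h2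
  · -- m = 1
    have h3 : l ^ 3 = -1 := by
      push_cast at h2
      linear_combination (l + 1) * h2
    calc l ^ 12 = (l ^ 3) ^ 4 := by ring
    _ = 1 := by rw [h3]; norm_num
  · -- m = 2
    have h3 : (l - 1) ^ 2 = 0 := by
      push_cast at h2
      linear_combination h2
    have hl1 : l = 1 := by
      have h4 := pow_eq_zero_iff (n := 2) (by norm_num) |>.mp h3
      linear_combination h4
    rw [hl1]; norm_num



lemma auxD {N : ℕ} [NeZero N] (A : Matrix (Fin N) (Fin N) ℂ) (τ : ℕ) (hτ : 0 < τ)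
    (hA : A ^ τ = 1)
    (hev : ∀ μ : ℂ, ∀ x : Fin N → ℂ, x ≠ 0 → A *ᵥ x = μ • x → μ ^ 12 = 1) :
    A ^ 12 = 1 := by
  set e : Module.End ℂ (Fin N → ℂ) := Matrix.toLinAlgEquiv' A with he
  have heτ : e ^ τ = 1 := by
    rw [he, ← _root_.map_pow, hA, _root_.map_one]
  have haev : (aeval e) (X ^ τ - 1 : ℂ[X]) = 0 := by
    simp [heτ]
  have hdvd : minpoly ℂ e ∣ (X ^ τ - 1 : ℂ[X]) := minpoly.dvd ℂ e haev
  have hsepτ : (X ^ τ - 1 : ℂ[X]).Separable := by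
    have := separable_X_pow_sub_C (F := ℂ) 1 (by exact_mod_cast hτ.ne') one_ne_zero
    simpa using this
  have hsep : (minpoly ℂ e).Separable := hsepτ.of_dvd hdvd
  have hint : IsIntegral ℂ e := IsIntegral.of_finite ℂ e
  have hmon : (minpoly ℂ e).Monic := minpoly.monic hint
  have hnodup : (minpoly ℂ e).roots.Nodup := nodup_roots hsep
  -- each root has μ^12 = 1
  have hroot12 : ∀ μ ∈ (minpoly ℂ e).roots, μ ^ 12 = 1 := by
    intro μ hμ
    have hisroot : (minpoly ℂ e).IsRoot μ := isRoot_of_mem_roots hμ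
    have heig : e.HasEigenvalue μ := (Module.End.hasEigenvalue_iff_isRoot).mpr hisroot
    obtain ⟨x, hx⟩ := heig.exists_hasEigenvector
    have hx0 : x ≠ 0 := hx.right
    have hex : e x = μ • x := hx.apply_eq_smul
    have : A *ᵥ x = μ • x := by
      rwa [he, Matrix.toLinAlgEquiv'_apply] at hex
    exact hev μ x hx0 this
  -- minpoly divides X^12 - 1
  have hdvd12 : minpoly ℂ e ∣ (X ^ 12 - 1 : ℂ[X]) := by
    have hsplit := (IsAlgClosed.splits _).eq_prod_roots_of_monic hmon
    rw [hsplit]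
    set t : Finset ℂ := ⟨(minpoly ℂ e).roots, hnodup⟩ with ht
    have hprodeq : (Multiset.map (fun a => X - C a) (minpoly ℂ e).roots).prod
        = ∏ a ∈ t, (X - C a) := rfl
    rw [hprodeq]
    apply Finset.prod_dvd_of_coprime
    · intro a ha b hb hab
      exact Polynomial.pairwise_coprime_X_sub_C Function.injective_id hab
    · intro a ha
      rw [dvd_iff_isRoot]
      have : a ∈ (minpoly ℂ e).roots := ha
      have h12 := hroot12 a this
      simp [IsRoot, h12]
  obtain ⟨g, hg⟩ := hdvd12
  have : (aeval e) (X ^ 12 - 1 : ℂ[X]) = 0 := by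
    rw [hg, _root_.map_mul, minpoly.aeval, zero_mul]
  have he12 : e ^ 12 = 1 := by
    have h' : e ^ 12 - 1 = 0 := by simpa using this
    rw [sub_eq_zero] at h'
    exact h'
  have hfin : Matrix.toLinAlgEquiv' (A ^ 12) = Matrix.toLinAlgEquiv' (1 : Matrix (Fin N) (Fin N) ℂ) := by
    rw [_root_.map_pow, _root_.map_one, ← he, he12]
  exact Matrix.toLinAlgEquiv'.injective hfin


open Matrix

theorem stmt_17 (k n f : ℕ) (hk : 0 < k) (hn : 0 < n) (hf : 0 < f)
    (V : Matrix (Fin k) (Fin n) ℝ) (W : Matrix (Fin k) (Fin f) ℝ)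
    (hV : Vᵀ * V = 1) (hW : Wᵀ * W = 1)
    (U : Matrix (Fin k) (Fin k) ℝ)
    (hU : U = (2 • (W * Wᵀ) - 1) * (2 • (V * Vᵀ) - 1))
    (hrat : ∀ μ : ℂ,
      (∃ x : Fin n → ℂ, x ≠ 0 ∧
        ((Vᵀ * W * Wᵀ * V).map Complex.ofReal) *ᵥ x = μ • x) →
      ∃ q : ℚ, μ = (q : ℂ))
    (τ : ℕ) (hτ : 1 < τ) (hUτ : U ^ τ = 1)
    (hmin : ∀ s : ℕ, 1 ≤ s → s < τ → U ^ s ≠ 1) :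
    τ = 2 ∨ τ = 3 ∨ τ = 4 ∨ τ = 6 ∨ τ = 12 := by
  haveI : NeZero k := ⟨hk.ne'⟩
  have hτ0 : 0 < τ := lt_trans Nat.zero_lt_one hτ
  -- complexification
  set φ := (Complex.ofRealHom.mapMatrix : Matrix (Fin k) (Fin k) ℝ →+* Matrix (Fin k) (Fin k) ℂ) with hφ
  set Vc : Matrix (Fin k) (Fin n) ℂ := V.map Complex.ofReal with hVcdef
  set Wc : Matrix (Fin k) (Fin f) ℂ := W.map Complex.ofReal with hWcdef
  set Uc : Matrix (Fin k) (Fin k) ℂ := U.map Complex.ofReal with hUcdef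
  have hVc : Vcᵀ * Vc = 1 := by
    have h := congrArg (fun M => M.map (Complex.ofRealHom : ℝ →+* ℂ)) hV
    simp [Matrix.map_mul, Matrix.transpose_map, Matrix.map_one] at h; exact h
  have hWc : Wcᵀ * Wc = 1 := by
    have h := congrArg (fun M => M.map (Complex.ofRealHom : ℝ →+* ℂ)) hW
    simp [Matrix.map_mul, Matrix.transpose_map, Matrix.map_one] at h; exact h
  set Pc : Matrix (Fin k) (Fin k) ℂ := Vc * Vcᵀ with hPcdef
  set Qc : Matrix (Fin k) (Fin k) ℂ := Wc * Wcᵀ with hQcdef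
  set Ac : Matrix (Fin k) (Fin k) ℂ := Pc + Pc - 1 with hAcdef
  set Bc : Matrix (Fin k) (Fin k) ℂ := Qc + Qc - 1 with hBcdef
  set Mc : Matrix (Fin n) (Fin n) ℂ := Vcᵀ * Wc * Wcᵀ * Vc with hMcdef
  have hQφ : φ (W * Wᵀ) = Qc := by
    rw [hφ, RingHom.mapMatrix_apply, Matrix.map_mul, Matrix.transpose_map]
    rfl
  have hPφ : φ (V * Vᵀ) = Pc := by
    rw [hφ, RingHom.mapMatrix_apply, Matrix.map_mul, Matrix.transpose_map]
    rfl
  have hUc : Uc = Bc * Ac := by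
    have hU' : U = ((W * Wᵀ) + (W * Wᵀ) - 1) * ((V * Vᵀ) + (V * Vᵀ) - 1) := by
      rw [hU, two_smul, two_smul]
    calc Uc = φ U := rfl
    _ = (φ (W * Wᵀ) + φ (W * Wᵀ) - 1) * (φ (V * Vᵀ) + φ (V * Vᵀ) - 1) := by
        rw [hU', _root_.map_mul, _root_.map_sub, _root_.map_sub, _root_.map_add,
          _root_.map_add, _root_.map_one]
    _ = Bc * Ac := by rw [hQφ, hPφ, hBcdef, hAcdef]
  have hPP : Pc * Pc = Pc := by
    rw [hPcdef]
    calc Vc * Vcᵀ * (Vc * Vcᵀ) = Vc * ((Vcᵀ * Vc) * Vcᵀ) := by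
          simp only [Matrix.mul_assoc]
    _ = Vc * Vcᵀ := by rw [hVc, Matrix.one_mul]
  have hQQ : Qc * Qc = Qc := by
    rw [hQcdef]
    calc Wc * Wcᵀ * (Wc * Wcᵀ) = Wc * ((Wcᵀ * Wc) * Wcᵀ) := by
          simp only [Matrix.mul_assoc]
    _ = Wc * Wcᵀ := by rw [hWc, Matrix.one_mul]
  have hAA : Ac * Ac = 1 := by
    have e1 : Ac * Ac = (Pc * Pc + Pc * Pc + Pc * Pc + Pc * Pc) - (Pc + Pc) - (Pc + Pc) + 1 := by
      rw [hAcdef]; noncomm_ring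
    rw [e1, hPP]; abel
  have hBB : Bc * Bc = 1 := by
    have e1 : Bc * Bc = (Qc * Qc + Qc * Qc + Qc * Qc + Qc * Qc) - (Qc + Qc) - (Qc + Qc) + 1 := by
      rw [hBcdef]; noncomm_ring
    rw [e1, hQQ]; abel
  have hABBA : (Ac * Bc) * (Bc * Ac) = 1 := by
    calc (Ac * Bc) * (Bc * Ac) = Ac * ((Bc * Bc) * Ac) := by simp only [Matrix.mul_assoc]
    _ = 1 := by rw [hBB, Matrix.one_mul, hAA]
  -- key rectangular identities
  have hRP : Vcᵀ * Pc = Vcᵀ := by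
    rw [hPcdef, ← Matrix.mul_assoc, hVc, Matrix.one_mul]
  have hRA : Vcᵀ * Ac = Vcᵀ := by
    rw [hAcdef, Matrix.mul_sub, Matrix.mul_add, hRP, Matrix.mul_one]; abel
  have hRQP : Vcᵀ * Qc * Pc = Mc * Vcᵀ := by
    rw [hQcdef, hPcdef, hMcdef]
    simp only [Matrix.mul_assoc]
  have hkey : Vcᵀ * (Bc * Ac) + Vcᵀ * (Ac * Bc)
      = (Mc + Mc + Mc + Mc) * Vcᵀ - (Vcᵀ + Vcᵀ) := by
    have hRB : Vcᵀ * Bc = Vcᵀ * Qc + Vcᵀ * Qc - Vcᵀ := by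
      rw [hBcdef, Matrix.mul_sub, Matrix.mul_add, Matrix.mul_one]
    have hRAB : Vcᵀ * (Ac * Bc) = Vcᵀ * Qc + Vcᵀ * Qc - Vcᵀ := by
      rw [← Matrix.mul_assoc, hRA, hRB]
    have hRQA : Vcᵀ * Qc * Ac = Mc * Vcᵀ + Mc * Vcᵀ - Vcᵀ * Qc := by
      rw [hAcdef, Matrix.mul_sub, Matrix.mul_add, Matrix.mul_one, hRQP]
    have hRBA : Vcᵀ * (Bc * Ac)
        = (Mc * Vcᵀ + Mc * Vcᵀ - Vcᵀ * Qc) + (Mc * Vcᵀ + Mc * Vcᵀ - Vcᵀ * Qc) - Vcᵀ := by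
      rw [← Matrix.mul_assoc, hRB, Matrix.sub_mul, Matrix.add_mul, hRQA, hRA]
    rw [hRAB, hRBA, Matrix.add_mul, Matrix.add_mul, Matrix.add_mul]
    abel
  -- complexified hypotheses
  have hUcτ : Uc ^ τ = 1 := by
    have h := congrArg φ hUτ
    rw [_root_.map_pow, _root_.map_one] at h
    exact h
  -- every eigenvalue of Uc has 12th power one
  have hev : ∀ μ : ℂ, ∀ x : Fin k → ℂ, x ≠ 0 → Uc *ᵥ x = μ • x → μ ^ 12 = 1 := by
    intro μ x hx0 hx
    have hpow : ∀ s : ℕ, (Uc ^ s) *ᵥ x = μ ^ s • x := by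
      intro s
      induction s with
      | zero => simp
      | succ s ih =>
        rw [pow_succ, ← Matrix.mulVec_mulVec, hx, Matrix.mulVec_smul, ih, smul_smul,
          pow_succ, mul_comm]
    have hμτ : μ ^ τ = 1 := by
      have h1 := hpow τ
      rw [hUcτ, Matrix.one_mulVec] at h1
      have h2 : (μ ^ τ - 1) • x = 0 := by rw [sub_smul, one_smul, ← h1, sub_self]
      rcases smul_eq_zero.mp h2 with h | h
      · exact sub_eq_zero.mp h
      · exact absurd h hx0
    have hμ0 : μ ≠ 0 := by
      intro h; rw [h, zero_pow hτ0.ne'] at hμτ; exact zero_ne_one hμτ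
    have hBAx : (Bc * Ac) *ᵥ x = μ • x := by rw [← hUc]; exact hx
    have hABx : (Ac * Bc) *ᵥ x = μ⁻¹ • x := by
      have h1 : (Ac * Bc) *ᵥ ((Bc * Ac) *ᵥ x) = x := by
        rw [Matrix.mulVec_mulVec, hABBA, Matrix.one_mulVec]
      rw [hBAx, Matrix.mulVec_smul] at h1
      exact (eq_inv_smul_iff₀ hμ0).mpr h1
    set y : Fin n → ℂ := Vcᵀ *ᵥ x with hydef
    by_cases hy : y = 0
    · -- μ² = 1
      have hPx : Pc *ᵥ x = 0 := by
        rw [hPcdef, ← Matrix.mulVec_mulVec, ← hydef, hy, Matrix.mulVec_zero]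
      have hAx : Ac *ᵥ x = -x := by
        rw [hAcdef, Matrix.sub_mulVec, Matrix.add_mulVec, hPx, Matrix.one_mulVec]
        simp
      have hBx : Bc *ᵥ x = -(μ • x) := by
        have h1 : Bc *ᵥ (Ac *ᵥ x) = μ • x := by rw [Matrix.mulVec_mulVec, hBAx]
        rw [hAx] at h1
        have h2 : Bc *ᵥ (-x) = -(Bc *ᵥ x) := by
          have := Matrix.mulVec_smul Bc (-1 : ℂ) x
          simpa using this
        rw [h2] at h1
        rw [← h1, neg_neg]
      have hxx : (μ ^ 2) • x = x := by
        have h1 : (Bc * Bc) *ᵥ x = x := by rw [hBB, Matrix.one_mulVec]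
        rw [← Matrix.mulVec_mulVec, hBx] at h1
        have h2 : Bc *ᵥ (-(μ • x)) = -(μ • (Bc *ᵥ x)) := by
          have := Matrix.mulVec_smul Bc (-μ : ℂ) x
          simpa [neg_smul] using this
        rw [h2, hBx] at h1
        calc (μ ^ 2) • x = μ • (μ • x) := by rw [smul_smul, ← pow_two]
        _ = x := by simpa [smul_neg, neg_neg] using h1
      have hμ2 : μ ^ 2 = 1 := by
        have h2 : (μ ^ 2 - 1) • x = 0 := by rw [sub_smul, one_smul, hxx, sub_self]
        rcases smul_eq_zero.mp h2 with h | h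
        · exact sub_eq_zero.mp h
        · exact absurd h hx0
      calc μ ^ 12 = (μ ^ 2) ^ 6 := by ring
      _ = 1 := by rw [hμ2]; norm_num
    · -- rational real part
      set z : Fin n → ℂ := Mc *ᵥ y with hzdef
      have h4z : z + z + z + z = (μ + μ⁻¹ + 2) • y := by
        have e1 : (Vcᵀ * (Bc * Ac)) *ᵥ x = Vcᵀ *ᵥ ((Bc * Ac) *ᵥ x) :=
          (Matrix.mulVec_mulVec x Vcᵀ (Bc * Ac)).symm
        have e2 : (Vcᵀ * (Ac * Bc)) *ᵥ x = Vcᵀ *ᵥ ((Ac * Bc) *ᵥ x) :=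
          (Matrix.mulVec_mulVec x Vcᵀ (Ac * Bc)).symm
        have hL : (Vcᵀ * (Bc * Ac) + Vcᵀ * (Ac * Bc)) *ᵥ x = μ • y + μ⁻¹ • y := by
          rw [Matrix.add_mulVec, e1, e2, hBAx, hABx, Matrix.mulVec_smul, Matrix.mulVec_smul]
        have e3 : ((Mc + Mc + Mc + Mc) * Vcᵀ) *ᵥ x = (Mc + Mc + Mc + Mc) *ᵥ y :=
          (Matrix.mulVec_mulVec x (Mc + Mc + Mc + Mc) Vcᵀ).symm
        have hR : ((Mc + Mc + Mc + Mc) * Vcᵀ - (Vcᵀ + Vcᵀ)) *ᵥ x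
            = (z + z + z + z) - (y + y) := by
          rw [Matrix.sub_mulVec, e3, Matrix.add_mulVec, Matrix.add_mulVec, Matrix.add_mulVec,
            Matrix.add_mulVec, ← hydef, ← hzdef]
        have h := hkey
        have h2 := congrArg (fun M => M *ᵥ x) h
        rw [hL, hR] at h2
        have : z + z + z + z = μ • y + μ⁻¹ • y + (y + y) := by
          rw [h2]; try abel
        rw [this, add_smul, add_smul]
        have h2y : (2 : ℂ) • y = y + y := by rw [two_smul]
        rw [h2y]
      have hMy : Mc *ᵥ y = ((μ + μ⁻¹ + 2) / 4) • y := by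
        have h5 : (4 : ℂ) • z = (μ + μ⁻¹ + 2) • y := by
          rw [show (4 : ℂ) = 1 + 1 + 1 + 1 by norm_num, add_smul, add_smul, add_smul, one_smul]
          rw [← h4z]
        calc Mc *ᵥ y = z := by rw [hzdef]
        _ = (4 : ℂ)⁻¹ • ((4 : ℂ) • z) := by rw [smul_smul]; norm_num
        _ = (4 : ℂ)⁻¹ • ((μ + μ⁻¹ + 2) • y) := by rw [h5]
        _ = ((μ + μ⁻¹ + 2) / 4) • y := by rw [smul_smul]; ring_nf
      have hMmap : (Vᵀ * W * Wᵀ * V).map Complex.ofReal = Mc := by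
        rw [hMcdef, hVcdef, hWcdef]
        rw [show ((Vᵀ * W * Wᵀ * V).map Complex.ofReal : Matrix (Fin n) (Fin n) ℂ)
          = (Vᵀ * W * Wᵀ * V).map (Complex.ofRealHom : ℝ →+* ℂ) from rfl]
        rw [Matrix.map_mul, Matrix.map_mul, Matrix.map_mul, Matrix.transpose_map,
          Matrix.transpose_map]
        rfl
      obtain ⟨q, hq⟩ := hrat ((μ + μ⁻¹ + 2) / 4) ⟨y, hy, by rw [hMmap]; exact hMy⟩
      have hsum : μ + μ⁻¹ = ((4 * q - 2 : ℚ) : ℂ) := by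
        have h1 : μ + μ⁻¹ + 2 = 4 * (q : ℂ) := by
          rw [div_eq_iff (by norm_num : (4 : ℂ) ≠ 0)] at hq
          linear_combination hq
        push_cast
        linear_combination h1
      exact auxN τ hτ0 μ hμτ (4 * q - 2) hsum
  -- conclude
  have hUc12 : Uc ^ 12 = 1 := auxD Uc τ hτ0 hUcτ hev
  have hU12 : U ^ 12 = 1 := by
    have h : φ (U ^ 12) = φ 1 := by
      rw [_root_.map_pow, _root_.map_one]
      exact hUc12
    have hinj : Function.Injective φ := by
      intro a b hab
      exact Matrix.map_injective Complex.ofReal_injective hab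
    exact hinj h
  have hord : orderOf U = τ := by
    have h1 : orderOf U ∣ τ := orderOf_dvd_of_pow_eq_one hUτ
    have hfin : IsOfFinOrder U := isOfFinOrder_iff_pow_eq_one.mpr ⟨τ, hτ0, hUτ⟩
    have hpos : 0 < orderOf U := hfin.orderOf_pos
    rcases lt_or_eq_of_le (Nat.le_of_dvd hτ0 h1) with h | h
    · exact absurd (pow_orderOf_eq_one U) (hmin _ hpos h)
    · exact h
  have hdvd : τ ∣ 12 := hord ▸ orderOf_dvd_of_pow_eq_one hU12
  have hle : τ ≤ 12 := Nat.le_of_dvd (by norm_num) hdvd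
  interval_cases τ <;> revert hdvd <;> decide
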